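/- Let ε ∈ [0,1] and define, for a nonincreasing sequence x ∈ [0,1]^ℕ with x_0 = 1, the function F_i(x) = λ[(1−2ε)(x_{i−1}² − x_i²) + 2ε(x_{i−1} − x_i)] − (x_i − x_{i+1}). Then for each i ≥ 1 and each j ≠ i, F_i(x) is nondecreasing in x_j. In particular, the partial derivative with respect to x_{i−1}, namely λ[2(1−2ε)x_{i−1} + 2ε], is nonnegative for all x_{i−1} ∈ [0,1]. -/
import Mathlib


/-- Drift function of the Po2-ε mean-field. -/
noncomputable def po2epsF (lam ε : ℝ) (x : ℕ → ℝ) (i : ℕ) : ℝ :=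
  lam * ((1 - 2 * ε) * ((x (i - 1))^2 - (x i)^2) + 2 * ε * (x (i - 1) - x i))
    - (x i - x (i + 1))

lemma po2eps_g_mono (ε a b : ℝ) (hε0 : 0 ≤ ε) (hε1 : ε ≤ 1)
    (ha : 0 ≤ a) (hab : a ≤ b) (hb : b ≤ 1) :
    (1 - 2 * ε) * a ^ 2 + 2 * ε * a ≤ (1 - 2 * ε) * b ^ 2 + 2 * ε * b := by
  rcases le_or_gt ε (1/2) with h | h
  · nlinarith [mul_nonneg (sub_nonneg.2 hab) (add_nonneg ha (ha.trans hab))]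
  · nlinarith [mul_nonneg (sub_nonneg.2 hab) (sub_nonneg.2 hb),
      mul_nonneg (sub_nonneg.2 hab) (sub_nonneg.2 ((hab.trans hb)))]

theorem po2epsF_quasimonotone (lam ε : ℝ) (hlam : 0 < lam)
    (hε0 : 0 ≤ ε) (hε1 : ε ≤ 1) :
    (∀ i : ℕ, 1 ≤ i → ∀ j : ℕ, j ≠ i → ∀ x x' : ℕ → ℝ,
      (∀ k : ℕ, 0 ≤ x k ∧ x k ≤ 1) → (∀ k : ℕ, 0 ≤ x' k ∧ x' k ≤ 1) →
      x 0 = 1 → x' 0 = 1 →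
      (∀ k : ℕ, x (k + 1) ≤ x k) → (∀ k : ℕ, x' (k + 1) ≤ x' k) →
      (∀ k : ℕ, k ≠ j → x k = x' k) → x j ≤ x' j →
      po2epsF lam ε x i ≤ po2epsF lam ε x' i) ∧
    (∀ a : ℝ, 0 ≤ a → a ≤ 1 → 0 ≤ lam * (2 * (1 - 2 * ε) * a + 2 * ε)) := by
  constructor
  · intro i hi j hj x x' hx hx' _ _ _ _ heq hle
    have hii : x i = x' i := heq i (Ne.symm hj)
    unfold po2epsF
    by_cases h1 : j = i - 1
    · have hne : i + 1 ≠ j := by omega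
      have h3 : x (i + 1) = x' (i + 1) := heq (i + 1) hne
      have hle' : x (i - 1) ≤ x' (i - 1) := h1 ▸ hle
      have hmono := po2eps_g_mono ε (x (i - 1)) (x' (i - 1)) hε0 hε1
        (hx (i - 1)).1 hle' (hx' (i - 1)).2
      rw [hii, h3]
      nlinarith [mul_le_mul_of_nonneg_left hmono hlam.le]
    · have h2 : x (i - 1) = x' (i - 1) := heq (i - 1) (by omega)
      by_cases h4 : j = i + 1
      · have hle' : x (i + 1) ≤ x' (i + 1) := h4 ▸ hle
        rw [hii, h2]; linarith
      · have h5 : x (i + 1) = x' (i + 1) := heq (i + 1) (by omega)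
        rw [hii, h2, h5]
  · intro a ha ha1
    apply mul_nonneg hlam.le
    rcases le_or_gt ε (1/2) with h | h
    · nlinarith
    · nlinarith
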